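/- For each index i, the real function f(t) = ℓ(μ(t), B, ν), where μ(t) is μ with its i-th coordinate replaced by t, is twice differentiable at t = μ_i and its second derivative equals (ν + D) · (2·((Ω·r)_i)² − Ω_{ii}·(ν + q)) / (ν + q)², where r = y − μ. -/

import Mathlib

open Matrix

/-- Multivariate t log-likelihood in the Cholesky precision parametrization `Ω = Bᵀ B`:
`ℓ(μ, B, ν) = log Γ((ν+D)/2) - log Γ(ν/2) - (D/2)·log ν - (D/2)·log π + log(det B)
  - ((ν+D)/2)·log(1 + q/ν)` with `q = ‖B(y-μ)‖²`. -/
noncomputable def tCholLL (D : ℕ) (y μ : Fin D → ℝ)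
    (B : Matrix (Fin D) (Fin D) ℝ) (ν : ℝ) : ℝ :=
  Real.log (Real.Gamma ((ν + D) / 2)) - Real.log (Real.Gamma (ν / 2))
    - ((D : ℝ) / 2) * Real.log ν - ((D : ℝ) / 2) * Real.log Real.pi
    + Real.log B.det
    - ((ν + D) / 2) * Real.log (1 + (∑ k, (B.mulVec (y - μ) k) ^ 2) / ν)

/-- Second partial derivative of the multivariate t log-likelihood with respect to the
`i`-th coordinate of the location `μ`: the map `t ↦ ℓ(μ(t), B, ν)` is twice
differentiable at `t = μ i` and its second derivative equals
`(ν + D)·(2·((Ω r)_i)² - Ω_{ii}·(ν + q)) / (ν + q)²` with `Ω = Bᵀ B`, `r = y - μ` and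
`q = ‖B(y-μ)‖²`. -/
theorem tChol_deriv2_mu (D : ℕ) (hD : 1 ≤ D) (y μ : Fin D → ℝ) (ν : ℝ) (hν : 0 < ν)
    (B : Matrix (Fin D) (Fin D) ℝ)
    (hLT : ∀ k l : Fin D, k < l → B k l = 0)
    (hdiag : ∀ k, 0 < B k k) (i : Fin D) :
    (∀ᶠ t in nhds (μ i),
        DifferentiableAt ℝ (fun t : ℝ => tCholLL D y (Function.update μ i t) B ν) t) ∧
      HasDerivAt (deriv (fun t : ℝ => tCholLL D y (Function.update μ i t) B ν))
        ((ν + D) * (2 * ((B.transpose * B).mulVec (y - μ) i) ^ 2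
            - (B.transpose * B) i i * (ν + ∑ k, (B.mulVec (y - μ) k) ^ 2)) /
          (ν + ∑ k, (B.mulVec (y - μ) k) ^ 2) ^ 2)
        (μ i) := by
  classical
  set c : Fin D → ℝ := B.mulVec (y - μ) with hc
  set W : ℝ := ∑ k, B k i * c k with hW
  set S : ℝ := ∑ k, B k i ^ 2 with hS
  set Q : ℝ := ∑ k, c k ^ 2 with hQ
  have hWgoal : (B.transpose * B).mulVec (y - μ) i = W := by
    rw [← Matrix.mulVec_mulVec]
    simp [Matrix.mulVec, dotProduct, Matrix.transpose_apply, hc, hW]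
  have hSgoal : (B.transpose * B) i i = S := by
    simp [Matrix.mul_apply, Matrix.transpose_apply, hS, sq]
  rw [hWgoal, hSgoal]
  -- pointwise formula for q
  have hmv : ∀ (t : ℝ) (k : Fin D),
      B.mulVec (y - Function.update μ i t) k = c k - (t - μ i) * B k i := by
    intro t k
    have : (y - Function.update μ i t) = (y - μ) - Pi.single i (t - μ i) := by
      funext j
      by_cases hj : j = i
      · subst hj; simp [Function.update_self]
      · simp [Function.update_of_ne hj, Pi.single_eq_of_ne hj]
    rw [this, Matrix.mulVec_sub]
    simp [Matrix.mulVec_single, hc, mul_comm]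
  have hq : ∀ t : ℝ, (∑ k, (B.mulVec (y - Function.update μ i t) k) ^ 2)
      = Q - 2 * (t - μ i) * W + (t - μ i) ^ 2 * S := by
    intro t
    have : ∀ k : Fin D, (B.mulVec (y - Function.update μ i t) k) ^ 2
        = c k ^ 2 - 2 * (t - μ i) * (B k i * c k) + (t - μ i) ^ 2 * B k i ^ 2 := by
      intro k; rw [hmv t k]; ring
    rw [Finset.sum_congr rfl fun k _ => this k]
    rw [Finset.sum_add_distrib, Finset.sum_sub_distrib, ← Finset.mul_sum, ← Finset.mul_sum]
  -- polynomial nonnegativity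
  have hpnn : ∀ t : ℝ, 0 ≤ Q - 2 * (t - μ i) * W + (t - μ i) ^ 2 * S := by
    intro t; rw [← hq t]; positivity
  have hpos : ∀ t : ℝ, 0 < 1 + (Q - 2 * (t - μ i) * W + (t - μ i) ^ 2 * S) / ν := by
    intro t
    have := hpnn t
    positivity
  -- rewrite F
  have hfeq : (fun t : ℝ => tCholLL D y (Function.update μ i t) B ν)
      = fun t : ℝ =>
        (Real.log (Real.Gamma ((ν + D) / 2)) - Real.log (Real.Gamma (ν / 2))
          - ((D : ℝ) / 2) * Real.log ν - ((D : ℝ) / 2) * Real.log Real.pi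
          + Real.log B.det)
        - (ν + D) / 2 * Real.log (1 + (Q - 2 * (t - μ i) * W + (t - μ i) ^ 2 * S) / ν) := by
    funext t
    simp only [tCholLL, hq t]
  -- derivative of the inner polynomial
  have hp : ∀ t : ℝ, HasDerivAt (fun t : ℝ => Q - 2 * (t - μ i) * W + (t - μ i) ^ 2 * S)
      (-2 * W + 2 * (t - μ i) * S) t := by
    intro t
    have h1 : HasDerivAt (fun t : ℝ => t - μ i) 1 t := (hasDerivAt_id t).sub_const _
    have h2 : HasDerivAt (fun t : ℝ => 2 * (t - μ i) * W) (2 * W) t := by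
      simpa using ((h1.const_mul (2 : ℝ)).mul_const W)
    have h3 : HasDerivAt (fun t : ℝ => (t - μ i) ^ 2 * S) (2 * (t - μ i) * S) t := by
      simpa using ((h1.pow 2).mul_const S)
    refine ((h2.const_sub Q).add h3).congr_deriv ?_
    ring
  have hden : ∀ t : ℝ, HasDerivAt
      (fun t : ℝ => 1 + (Q - 2 * (t - μ i) * W + (t - μ i) ^ 2 * S) / ν)
      ((-2 * W + 2 * (t - μ i) * S) / ν) t := by
    intro t
    exact ((hp t).div_const ν).const_add 1
  -- derivative of F
  have hF : ∀ t : ℝ, HasDerivAt (fun t : ℝ => tCholLL D y (Function.update μ i t) B ν)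
      ((-((ν + D) / 2) * ((-2 * W + 2 * (t - μ i) * S) / ν))
        / (1 + (Q - 2 * (t - μ i) * W + (t - μ i) ^ 2 * S) / ν)) t := by
    intro t
    rw [hfeq]
    have hlog := (hden t).log (ne_of_gt (hpos t))
    have := (hlog.const_mul ((ν + D) / 2)).const_sub
      (Real.log (Real.Gamma ((ν + D) / 2)) - Real.log (Real.Gamma (ν / 2))
        - ((D : ℝ) / 2) * Real.log ν - ((D : ℝ) / 2) * Real.log Real.pi + Real.log B.det)
    refine this.congr_deriv ?_
    ring
  refine ⟨Filter.Eventually.of_forall fun t => (hF t).differentiableAt, ?_⟩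
  have hderiv : deriv (fun t : ℝ => tCholLL D y (Function.update μ i t) B ν)
      = fun t : ℝ => (-((ν + D) / 2) * ((-2 * W + 2 * (t - μ i) * S) / ν))
        / (1 + (Q - 2 * (t - μ i) * W + (t - μ i) ^ 2 * S) / ν) := by
    funext t; exact (hF t).deriv
  rw [hderiv]
  -- derivative of numerator
  have h1 : HasDerivAt (fun t : ℝ => t - μ i) 1 (μ i) := (hasDerivAt_id _).sub_const _
  have hnum : HasDerivAt (fun t : ℝ => -((ν + D) / 2) * ((-2 * W + 2 * (t - μ i) * S) / ν))
      (-((ν + D) / 2) * (2 * S / ν)) (μ i) := by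
    have h2 : HasDerivAt (fun t : ℝ => -2 * W + 2 * (t - μ i) * S) (2 * S) (μ i) := by
      simpa using (((h1.const_mul (2 : ℝ)).mul_const S).const_add (-2 * W))
    exact (h2.div_const ν).const_mul _
  have hQpos : (0 : ℝ) < ν + Q := by
    have : (0 : ℝ) ≤ Q := by rw [hQ]; positivity
    linarith
  have hdiv := hnum.div (hden (μ i)) (ne_of_gt (hpos (μ i)))
  refine hdiv.congr_deriv ?_
  have hν' : ν ≠ 0 := ne_of_gt hν
  have hQν : ν + Q ≠ 0 := ne_of_gt hQpos
  simp only [sub_self, mul_zero, zero_mul, add_zero, mul_comm]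
  field_simp
  norm_num only [sub_zero, mul_zero, add_zero]
  rw [mul_div_cancel_right₀ _ (pow_ne_zero 2 hQν)]
  ring
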